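/- For gl(ℓ,ℂ) embedded in so(2ℓ,ℂ) as the stabilizer of an isotropic decomposition ℂ^{2ℓ} = V ⊕ V*, an involutive automorphism X ↦ AXA⁻¹ of so(2ℓ,ℂ) (A ∈ O(2ℓ,ℂ), A² = ±1) preserving gl(ℓ,ℂ) either preserves both V and V* or interchanges them; if it interchanges them and A² = −1, then in a basis adapted to (V,V*), A = [[0, M],[−M⁻¹, 0]] with Mᵗ = −M (so ℓ must be even). -/

import Mathlib

open Matrix

private lemma std_transpose {ℓ : ℕ} (i j : Fin ℓ) :
    (single i j (1:ℂ))ᵀ = single j i (1:ℂ) := by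
  ext m n
  simp [single, transpose_apply, and_comm]

private lemma mul_std_mul_apply {ℓ : ℕ} (a b : Matrix (Fin ℓ) (Fin ℓ) ℂ)
    (n j m l : Fin ℓ) :
    (a * single n j (1:ℂ) * b) m l = a m n * b j l := by
  rw [Matrix.mul_apply]
  rw [Finset.sum_eq_single j]
  · rw [Matrix.mul_single_apply_same, mul_one]
  · intro y _ hy
    rw [Matrix.mul_single_apply_of_ne _ _ _ _ _ hy, zero_mul]
  · simp

/-- Key lemma: under the entrywise consequence of the preservation condition,
`a = 0` or `b = 0`. -/
private lemma key_aux {ℓ : ℕ} (hℓ : 1 ≤ ℓ) (a b c d : Matrix (Fin ℓ) (Fin ℓ) ℂ) (ε : ℂ)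
    (hε0 : ε ≠ 0)
    (E1 : ∀ m n j l : Fin ℓ, a m n * b j l = b m j * d n l)
    (hab : a * b + b * d = 0)
    (hdc : d * c = 0)
    (ha2 : a * a + b * c = ε • 1) :
    a = 0 ∨ b = 0 := by
  by_contra hcon
  push_neg at hcon
  obtain ⟨ha, hb⟩ := hcon
  obtain ⟨k, i, hki⟩ : ∃ k i, a k i ≠ 0 := by
    by_contra h'
    push_neg at h'
    exact ha (by ext m n; simpa using h' m n)
  obtain ⟨p, q, hpq⟩ : ∃ p q, b p q ≠ 0 := by
    by_contra h'
    push_neg at h'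
    exact hb (by ext m n; simpa using h' m n)
  -- b * c = 0
  have hbc : b * c = 0 := by
    ext m l
    have h0 : a k i * (b * c) m l = b k m * (d * c) i l := by
      rw [Matrix.mul_apply, Matrix.mul_apply, Finset.mul_sum, Finset.mul_sum]
      refine Finset.sum_congr rfl fun n _ => ?_
      have h := E1 k i m n
      linear_combination c n l * h
    rw [hdc] at h0
    simp only [Matrix.zero_apply, mul_zero] at h0
    have := (mul_eq_zero.mp h0).resolve_left hki
    simpa using this
  have haa : a * a = ε • 1 := by rwa [hbc, add_zero] at ha2
  -- main identity
  have main : ∀ m l, (a * a) m l * (b p q * b p q)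
      = b m p * d l q * ∑ n, d n q * b n p := by
    intro m l
    rw [Matrix.mul_apply, Finset.sum_mul, Finset.mul_sum]
    refine Finset.sum_congr rfl fun n _ => ?_
    have h1 := E1 m n p q
    have h2 := E1 n l p q
    linear_combination (a n l * b p q) * h1 + (b m p * d n q) * h2
  have haa' : ∀ m l, (a * a) m l = if m = l then ε else 0 := by
    intro m l
    rw [haa]
    simp [Matrix.smul_apply, Matrix.one_apply]
  rcases eq_or_lt_of_le hℓ with h1 | h2
  · -- ℓ = 1
    have h1' : (1 : ℕ) = ℓ := h1
    subst h1'
    have hk : k = 0 := Subsingleton.elim _ _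
    have hi : i = 0 := Subsingleton.elim _ _
    have hp : p = 0 := Subsingleton.elim _ _
    have hq : q = 0 := Subsingleton.elim _ _
    subst hk hi hp hq
    have e1 := E1 0 0 0 0
    have e2 : (a * b + b * d) 0 0 = 0 := by rw [hab]; rfl
    rw [Matrix.add_apply, Matrix.mul_apply, Matrix.mul_apply] at e2
    simp only [Fin.sum_univ_one] at e2
    have hz : a 0 0 * b 0 0 = 0 := by linear_combination e2 / 2 + e1 / 2
    exact (mul_ne_zero hki hpq) hz
  · -- ℓ ≥ 2
    have h0l : (0 : ℕ) < ℓ := by omega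
    have h1l : (1 : ℕ) < ℓ := h2
    set m0 : Fin ℓ := ⟨0, h0l⟩
    set m1 : Fin ℓ := ⟨1, h1l⟩
    have hne : m0 ≠ m1 := by
      intro h
      have := congrArg Fin.val h
      simp [m0, m1] at this
    have d00 := main m0 m0
    have d11 := main m1 m1
    have d01 := main m0 m1
    rw [haa' m0 m0, if_pos rfl] at d00
    rw [haa' m1 m1, if_pos rfl] at d11
    rw [haa' m0 m1, if_neg hne] at d01
    have hL0 : ε * (b p q * b p q) ≠ 0 :=
      mul_ne_zero hε0 (mul_ne_zero hpq hpq)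
    have hb0 : b m0 p ≠ 0 := by
      intro h; apply hL0; rw [d00, h]; ring
    have hσ : (∑ n, d n q * b n p) ≠ 0 := by
      intro h; apply hL0; rw [d00, h]; ring
    have hd1 : d m1 q ≠ 0 := by
      intro h; apply hL0; rw [d11, h]; ring
    rw [zero_mul] at d01
    exact (mul_ne_zero (mul_ne_zero hb0 hd1) hσ) d01.symm

theorem involution_preserving_gl (ℓ : ℕ) (hℓ : 1 ≤ ℓ)
    (A : Matrix (Fin ℓ ⊕ Fin ℓ) (Fin ℓ ⊕ Fin ℓ) ℂ) (ε : ℂ) (hε : ε = 1 ∨ ε = -1)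
    (hA2 : A * A = ε • (1 : Matrix (Fin ℓ ⊕ Fin ℓ) (Fin ℓ ⊕ Fin ℓ) ℂ))
    (hO : Aᵀ * (fromBlocks 0 1 1 0) * A = (fromBlocks 0 1 1 0 :
      Matrix (Fin ℓ ⊕ Fin ℓ) (Fin ℓ ⊕ Fin ℓ) ℂ))
    (hpres : ∀ B : Matrix (Fin ℓ) (Fin ℓ) ℂ, ∃ C : Matrix (Fin ℓ) (Fin ℓ) ℂ,
      A * (fromBlocks B 0 0 (-Bᵀ)) * (ε • A) = fromBlocks C 0 0 (-Cᵀ)) :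
    ((∃ α β, A = fromBlocks α 0 0 β) ∨ (∃ M N, A = fromBlocks 0 M N 0)) ∧
    ((∃ M N, A = fromBlocks 0 M N 0) → ε = -1 →
      ∃ M : Matrix (Fin ℓ) (Fin ℓ) ℂ,
        IsUnit M ∧ Mᵀ = -M ∧ A = fromBlocks 0 M (-(M⁻¹)) 0 ∧ Even ℓ) := by
  have hε0 : ε ≠ 0 := by rcases hε with h | h <;> rw [h] <;> norm_num
  have hε2 : ε * ε = 1 := by rcases hε with h | h <;> rw [h] <;> norm_num
  set a := A.toBlocks₁₁ with ha_def
  set b := A.toBlocks₁₂ with hb_def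
  set c := A.toBlocks₂₁ with hc_def
  set d := A.toBlocks₂₂ with hd_def
  have hA : A = fromBlocks a b c d := (fromBlocks_toBlocks A).symm
  -- block equations from hA2
  have hA2' : fromBlocks (a*a + b*c) (a*b + b*d) (c*a + d*c) (c*b + d*d)
      = fromBlocks (ε • 1) 0 0 (ε • 1) := by
    rw [← fromBlocks_multiply, ← hA, hA2, ← fromBlocks_one, fromBlocks_smul]
    simp
  have h11 : a*a + b*c = ε • 1 := by
    have := congrArg Matrix.toBlocks₁₁ hA2'; simpa using this
  have h12 : a*b + b*d = 0 := by
    have := congrArg Matrix.toBlocks₁₂ hA2'; simpa using this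
  have h21 : c*a + d*c = 0 := by
    have := congrArg Matrix.toBlocks₂₁ hA2'; simpa using this
  have h22 : c*b + d*d = ε • 1 := by
    have := congrArg Matrix.toBlocks₂₂ hA2'; simpa using this
  -- A * (ε • A) = 1
  have hAinv : A * (ε • A) = 1 := by
    rw [Matrix.mul_smul, hA2, smul_smul, hε2, one_smul]
  -- Aᵀ Q = ε • (Q A)
  have hQsymm : Aᵀ * (fromBlocks 0 1 1 0) = ε • ((fromBlocks 0 1 1 0 :
      Matrix (Fin ℓ ⊕ Fin ℓ) (Fin ℓ ⊕ Fin ℓ) ℂ) * A) := by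
    calc Aᵀ * (fromBlocks 0 1 1 0)
        = Aᵀ * (fromBlocks 0 1 1 0) * (A * (ε • A)) := by rw [hAinv, Matrix.mul_one]
      _ = (Aᵀ * (fromBlocks 0 1 1 0) * A) * (ε • A) := by
          rw [Matrix.mul_assoc (Aᵀ * (fromBlocks 0 1 1 0)) A (ε • A)]
      _ = (fromBlocks 0 1 1 0) * (ε • A) := by rw [hO]
      _ = ε • ((fromBlocks 0 1 1 0) * A) := by rw [Matrix.mul_smul]
  -- blockwise transpose relations
  have hQb : fromBlocks cᵀ aᵀ dᵀ bᵀ = fromBlocks (ε • c) (ε • d) (ε • a) (ε • b) := by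
    have lhs : Aᵀ * (fromBlocks 0 1 1 0) = fromBlocks cᵀ aᵀ dᵀ bᵀ := by
      rw [hA, fromBlocks_transpose, fromBlocks_multiply]
      simp
    have rhs : ε • ((fromBlocks 0 1 1 0 :
        Matrix (Fin ℓ ⊕ Fin ℓ) (Fin ℓ ⊕ Fin ℓ) ℂ) * A)
        = fromBlocks (ε • c) (ε • d) (ε • a) (ε • b) := by
      rw [hA, fromBlocks_multiply, fromBlocks_smul]
      simp
    rw [← lhs, ← rhs, hQsymm]
  have hct : cᵀ = ε • c := by
    have := congrArg Matrix.toBlocks₁₁ hQb; simpa using this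
  have hat : aᵀ = ε • d := by
    have := congrArg Matrix.toBlocks₁₂ hQb; simpa using this
  have hdt : dᵀ = ε • a := by
    have := congrArg Matrix.toBlocks₂₁ hQb; simpa using this
  have hbt : bᵀ = ε • b := by
    have := congrArg Matrix.toBlocks₂₂ hQb; simpa using this
  -- matrix-level preservation consequences
  have E1mat : ∀ B : Matrix (Fin ℓ) (Fin ℓ) ℂ, a * B * b = b * Bᵀ * d := by
    intro B
    obtain ⟨C, hC⟩ := hpres B
    rw [Matrix.mul_smul, hA, fromBlocks_multiply, fromBlocks_multiply,
      fromBlocks_smul] at hC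
    have h0 := congrArg Matrix.toBlocks₁₂ hC
    simp only [toBlocks_fromBlocks₁₂] at h0
    have h1 : (a * B + b * 0) * b + (a * 0 + b * -Bᵀ) * d = 0 :=
      (smul_eq_zero.mp h0).resolve_left hε0
    simp only [Matrix.mul_zero, Matrix.zero_mul, add_zero, zero_add,
      Matrix.mul_neg, Matrix.neg_mul] at h1
    exact add_neg_eq_zero.mp h1
  have E2mat : ∀ B : Matrix (Fin ℓ) (Fin ℓ) ℂ, c * B * a = d * Bᵀ * c := by
    intro B
    obtain ⟨C, hC⟩ := hpres B
    rw [Matrix.mul_smul, hA, fromBlocks_multiply, fromBlocks_multiply,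
      fromBlocks_smul] at hC
    have h0 := congrArg Matrix.toBlocks₂₁ hC
    simp only [toBlocks_fromBlocks₂₁] at h0
    have h1 : (c * B + d * 0) * a + (c * 0 + d * -Bᵀ) * c = 0 :=
      (smul_eq_zero.mp h0).resolve_left hε0
    simp only [Matrix.mul_zero, Matrix.zero_mul, add_zero, zero_add,
      Matrix.mul_neg, Matrix.neg_mul] at h1
    exact add_neg_eq_zero.mp h1
  -- entrywise versions
  have E1 : ∀ m n j l : Fin ℓ, a m n * b j l = b m j * d n l := by
    intro m n j l
    have h := E1mat (single n j (1:ℂ))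
    have h' := congrFun (congrFun h m) l
    rw [std_transpose] at h'
    rw [mul_std_mul_apply, mul_std_mul_apply] at h'
    exact h'
  have E2 : ∀ m n j l : Fin ℓ, c m n * a j l = d m j * c n l := by
    intro m n j l
    have h := E2mat (single n j (1:ℂ))
    have h' := congrFun (congrFun h m) l
    rw [std_transpose] at h'
    rw [mul_std_mul_apply, mul_std_mul_apply] at h'
    exact h'
  -- a*b = b*d, c*a = d*c
  have eab : a * b = b * d := by
    ext m l
    rw [Matrix.mul_apply, Matrix.mul_apply]
    exact Finset.sum_congr rfl fun n _ => E1 m n n l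
  have eca : c * a = d * c := by
    ext m l
    rw [Matrix.mul_apply, Matrix.mul_apply]
    exact Finset.sum_congr rfl fun n _ => E2 m n n l
  have hab0 : a * b = 0 := by
    have h2' : (2 : ℂ) • (a * b) = 0 := by
      rw [two_smul]
      calc a * b + a * b = a * b + b * d := by rw [eab]
        _ = 0 := h12
    simpa using (smul_eq_zero.mp h2').resolve_left (by norm_num)
  have hdc0 : d * c = 0 := by
    have h2' : (2 : ℂ) • (d * c) = 0 := by
      rw [two_smul]
      calc d * c + d * c = c * a + d * c := by rw [eca]
        _ = 0 := h21
    simpa using (smul_eq_zero.mp h2').resolve_left (by norm_num)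
  -- apply key lemma twice
  have key1 : a = 0 ∨ b = 0 := key_aux hℓ a b c d ε hε0 E1 h12 hdc0 h11
  have key2 : d = 0 ∨ c = 0 := by
    refine key_aux hℓ d c b a ε hε0 (fun m n j l => (E2 m j n l).symm) ?_ hab0 ?_
    · rw [add_comm]; exact h21
    · rw [add_comm]; exact h22
  -- dichotomy
  have part1 : (∃ α β, A = fromBlocks α 0 0 β) ∨ (∃ M N, A = fromBlocks 0 M N 0) := by
    by_cases haz : a = 0
    · right
      have hdz : d = 0 := by
        have h' : dᵀ = 0 := by rw [hdt, haz, smul_zero]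
        have := congrArg Matrix.transpose h'
        simpa using this
      exact ⟨b, c, by rw [hA, haz, hdz]⟩
    · left
      have hbz : b = 0 := key1.resolve_left haz
      have hcz : c = 0 := by
        refine key2.resolve_left ?_
        intro hdz
        apply haz
        have h' : aᵀ = 0 := by rw [hat, hdz, smul_zero]
        have := congrArg Matrix.transpose h'
        simpa using this
      exact ⟨a, d, by rw [hA, hbz, hcz]⟩
  refine ⟨part1, ?_⟩
  rintro ⟨M, N, hMN⟩ hεm1
  have haz : a = 0 := by
    have := congrArg Matrix.toBlocks₁₁ hMN; rw [← ha_def] at this; simpa using this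
  have hbM : b = M := by
    have := congrArg Matrix.toBlocks₁₂ hMN; rw [← hb_def] at this; simpa using this
  have hcN : c = N := by
    have := congrArg Matrix.toBlocks₂₁ hMN; rw [← hc_def] at this; simpa using this
  have hdz : d = 0 := by
    have := congrArg Matrix.toBlocks₂₂ hMN; rw [← hd_def] at this; simpa using this
  -- M * N = -1
  have hMNeq : M * N = -(1 : Matrix (Fin ℓ) (Fin ℓ) ℂ) := by
    have h' := h11
    rw [haz, hbM, hcN, hεm1] at h'
    simpa using h'
  have hone : M * (-N) = 1 := by rw [Matrix.mul_neg, hMNeq, neg_neg]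
  have hMunit : IsUnit M := (Matrix.isUnit_iff_isUnit_det M).mpr (Matrix.isUnit_det_of_right_inverse hone)
  have hMinv : M⁻¹ = -N := inv_eq_right_inv hone
  have hNeq : N = -(M⁻¹) := by rw [hMinv, neg_neg]
  have hMskew : Mᵀ = -M := by
    rw [← hbM, hbt, hεm1, hbM]
    simp
  have hEven : Even ℓ := by
    rcases Nat.even_or_odd ℓ with h | h
    · exact h
    · exfalso
      have hdet : M.det ≠ 0 := by
        have hu := hMunit
        rw [Matrix.isUnit_iff_isUnit_det] at hu
        exact hu.ne_zero
      have h1 : M.det = (-M).det := by rw [← hMskew, Matrix.det_transpose]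
      rw [Matrix.det_neg] at h1
      simp only [Fintype.card_fin, Odd.neg_one_pow h] at h1
      apply hdet
      have h2 : (2 : ℂ) * M.det = 0 := by linear_combination h1
      rcases mul_eq_zero.mp h2 with h' | h'
      · norm_num at h'
      · exact h'
  exact ⟨M, hMunit, hMskew, by rw [hMN, hNeq], hEven⟩
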